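/- Fix α > 0, ℓ ∈ ℝ, and ℓ̃ ∈ ℝ, and with β_c = log 4 define β_n = β_c + 1/n^α and K_n = K(β_c) + K'(β_c)/n^α + ℓ/(2n^{2α}) + ℓ̃/(6n^{3α}). Then as n → ∞, n^{3α}·G_{β_n,K_n}(x/n^{α/2}) converges to the Ginzburg–Landau polynomial g_ℓ(x) = (1/2)·β_c(K''(β_c) − ℓ)·x² − 4c₄·x⁴ + c₆·x⁶ uniformly for x in every compact subset of ℝ, where c₄ = 3/16 and c₆ = 9/40. -/

import Mathlib

open Real Filter

noncomputable def cgf (β t : ℝ) : ℝ :=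
  Real.log ((1 + Real.exp (-β) * (Real.exp t + Real.exp (-t))) / (1 + 2 * Real.exp (-β)))

noncomputable def freeEnergyG (β K x : ℝ) : ℝ := β * K * x ^ 2 - cgf β (2 * β * K * x)

noncomputable def Kcurve (β : ℝ) : ℝ := (Real.exp β + 2) / (4 * β)

noncomputable def c4coef (β : ℝ) : ℝ := (Real.exp β + 2) ^ 2 * (4 - Real.exp β) / (8 * 24)

open Set

lemma cgf_eq (β t : ℝ) :
    cgf β t = Real.log (1 + (2 / (Real.exp β + 2)) * ((Real.exp t + Real.exp (-t)) / 2 - 1)) := by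
  unfold cgf
  congr 1
  have hE : (0:ℝ) < Real.exp β := Real.exp_pos β
  rw [Real.exp_neg]
  field_simp
  ring

lemma u_nonneg (t : ℝ) : 0 ≤ (Real.exp t + Real.exp (-t)) / 2 - 1 := by
  have h := Real.add_one_le_exp t
  have h2 := Real.add_one_le_exp (-t)
  nlinarith [Real.exp_pos t, Real.exp_pos (-t), sq_nonneg (Real.exp t - 1),
    Real.exp_neg t, mul_pos (Real.exp_pos t) (Real.exp_pos (-t))]

lemma cosh_approx {t : ℝ} (ht : |t| ≤ 1) :
    |(Real.exp t + Real.exp (-t)) / 2 - 1 - (t^2/2 + t^4/24 + t^6/720)| ≤ t^8/1000 := by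
  have h1 := Real.exp_bound ht (n := 8) (by norm_num)
  have h2 := Real.exp_bound (x := -t) (by rwa [abs_neg]) (n := 8) (by norm_num)
  have hs1 : ∑ i ∈ Finset.range 8, t ^ i / (Nat.factorial i : ℝ)
      = 1 + t + t^2/2 + t^3/6 + t^4/24 + t^5/120 + t^6/720 + t^7/5040 := by
    norm_num [Finset.sum_range_succ, Nat.factorial]
    try ring
  have hs2 : ∑ i ∈ Finset.range 8, (-t) ^ i / (Nat.factorial i : ℝ)
      = 1 - t + t^2/2 - t^3/6 + t^4/24 - t^5/120 + t^6/720 - t^7/5040 := by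
    norm_num [Finset.sum_range_succ, Nat.factorial]
    try ring
  rw [hs1] at h1
  rw [hs2, abs_neg] at h2
  have hfac : ((Nat.factorial 8 : ℝ)) = 40320 := by norm_num [Nat.factorial]
  rw [hfac] at h1 h2
  have ht8 : |t|^8 = t^8 := by
    rw [← abs_pow, abs_of_nonneg (by positivity)]
  have h18 : t^8 ≤ 1 := by
    calc t^8 = |t|^8 := ht8.symm
    _ ≤ 1 := by exact pow_le_one₀ (abs_nonneg t) ht
  rw [ht8] at h1 h2
  have e1 := abs_le.mp h1
  have e2 := abs_le.mp h2
  rw [abs_le]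
  constructor <;> nlinarith [e1.1, e1.2, e2.1, e2.2]

lemma log_approx {x : ℝ} (h0 : 0 ≤ x) (h3 : x ≤ 1/3) :
    |Real.log (1+x) - (x - x^2/2 + x^3/3)| ≤ x^4 * (3/2) := by
  have h := Real.abs_log_sub_add_sum_range_le (x := -x)
    (by rw [abs_neg, abs_of_nonneg h0]; linarith) 3
  have hsum : ∑ i ∈ Finset.range 3, (-x) ^ (i+1) / ((i:ℝ)+1)
      = -x + x^2/2 - x^3/3 := by
    norm_num [Finset.sum_range_succ]
    try ring
  rw [hsum, sub_neg_eq_add] at h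
  have heq : (-x + x^2/2 - x^3/3 + Real.log (1+x))
      = Real.log (1+x) - (x - x^2/2 + x^3/3) := by ring
  rw [heq, abs_neg, abs_of_nonneg h0] at h
  refine h.trans ?_
  rw [div_le_iff₀ (by linarith : (0:ℝ) < 1 - x)]
  nlinarith [pow_nonneg h0 4, pow_nonneg h0 3]

set_option maxHeartbeats 2000000 in
lemma polyA {p u s : ℝ} (hp0 : 0 ≤ p) (hp3 : p ≤ 1/3) (hu0 : 0 ≤ u)
    (hs0 : 0 ≤ s) (hs1 : s ≤ 1)
    (hc : |u - (s/2 + s^2/24 + s^3/720)| ≤ s^4/1000) :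
    |(p*u - (p*u)^2/2 + (p*u)^3/3)
      - (p*s/2 + (p/24 - p^2/8)*s^2 + (p/720 - p^2/48 + p^3/24)*s^3)| ≤ s^4/100 := by
  have hs2 : s^2 ≤ s := by nlinarith
  have hs3 : s^3 ≤ s^2 := by nlinarith
  have hs4 : s^4 ≤ s^3 := by nlinarith
  have hs5 : s^5 ≤ s^4 := by nlinarith
  have hs6 : s^6 ≤ s^4 := by nlinarith
  have hcc := abs_le.mp hc
  have hd2 : |u - s/2| ≤ s^2/20 := by
    rw [abs_le]; constructor <;> nlinarith [hcc.1, hcc.2]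
  have hd3 : |u - s/2 - s^2/24| ≤ s^3/400 := by
    rw [abs_le]; constructor <;> nlinarith [hcc.1, hcc.2]
  have e2 := abs_le.mp hd2
  have e3 := abs_le.mp hd3
  -- quadratic piece
  have hq1 : s*(u - s/2 - s^2/24) ≤ s^4/400 := by
    have h := mul_le_mul_of_nonneg_left e3.2 hs0
    nlinarith [h]
  have hq1' : -(s^4/400) ≤ s*(u - s/2 - s^2/24) := by
    have h := mul_le_mul_of_nonneg_left e3.1 hs0
    nlinarith [h]
  have hq2 : (u - s/2)^2 ≤ s^4/400 := by
    have h : |u - s/2|^2 ≤ (s^2/20)^2 := pow_le_pow_left₀ (abs_nonneg _) hd2 2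
    rw [← sq_abs]
    nlinarith [h]
  have A2 : |u^2 - (s^2/4 + s^3/24)| ≤ s^4/200 := by
    rw [abs_le]; constructor
    · linarith [hq1', sq_nonneg (u - s/2)]
    · linarith [hq1, hq2, sq_nonneg (u - s/2)]
  -- cubic piece
  have hss : (0:ℝ) ≤ s^2 := sq_nonneg s
  have hr1 : s^2*(u - s/2) ≤ s^4/20 := by
    have h := mul_le_mul_of_nonneg_left e2.2 hss
    nlinarith [h]
  have hr1' : -(s^4/20) ≤ s^2*(u - s/2) := by
    have h := mul_le_mul_of_nonneg_left e2.1 hss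
    nlinarith [h]
  have hr2 : s*(u - s/2)^2 ≤ s^4/400 := by
    have h := mul_le_mul_of_nonneg_left hq2 hs0
    nlinarith [h, hs5]
  have hr3 : |(u - s/2)^3| ≤ s^4/8000 := by
    rw [abs_pow]
    calc |u - s/2|^3 ≤ (s^2/20)^3 := by
          exact pow_le_pow_left₀ (abs_nonneg _) hd2 3
    _ = s^6/8000 := by ring
    _ ≤ s^4/8000 := by linarith
  have e4 := abs_le.mp hr3
  have A3 : |u^3 - s^3/8| ≤ s^4/15 := by
    rw [abs_le]; constructor
    · linarith [hr1', e4.1, mul_nonneg hs0 (sq_nonneg (u - s/2))]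
    · linarith [hr1, hr2, e4.2]
  -- assemble
  have hP : (p*u - (p*u)^2/2 + (p*u)^3/3)
      - (p*s/2 + (p/24 - p^2/8)*s^2 + (p/720 - p^2/48 + p^3/24)*s^3)
      = p*(u - (s/2 + s^2/24 + s^3/720)) - p^2/2*(u^2 - (s^2/4 + s^3/24))
        + p^3/3*(u^3 - s^3/8) := by ring
  rw [hP]
  have hp2 : p^2 ≤ 1/9 := by nlinarith
  have hp3' : p^3 ≤ 1/27 := by nlinarith
  have t1 : |p*(u - (s/2 + s^2/24 + s^3/720))| ≤ (1/3)*(s^4/1000) := by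
    rw [abs_mul, abs_of_nonneg hp0]
    exact mul_le_mul hp3 hc (abs_nonneg _) (by norm_num)
  have t2 : |p^2/2*(u^2 - (s^2/4 + s^3/24))| ≤ (1/18)*(s^4/200) := by
    rw [abs_mul, abs_div, abs_of_nonneg (sq_nonneg p)]
    have : |(2:ℝ)| = 2 := by norm_num
    rw [this]
    calc p^2/2 * |u^2 - (s^2/4 + s^3/24)| ≤ (1/9)/2 * (s^4/200) := by
          apply mul_le_mul (by linarith) A2 (abs_nonneg _) (by norm_num)
    _ = (1/18)*(s^4/200) := by ring
  have t3 : |p^3/3*(u^3 - s^3/8)| ≤ (1/27)*(s^4/15)/3 := by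
    rw [abs_mul, abs_div]
    have h3 : |(3:ℝ)| = 3 := by norm_num
    have hpp : |p^3| = p^3 := abs_of_nonneg (by positivity)
    rw [h3, hpp]
    calc p^3/3 * |u^3 - s^3/8| ≤ (1/27)/3 * (s^4/15) := by
          apply mul_le_mul (by linarith) A3 (abs_nonneg _) (by norm_num)
    _ = (1/27)*(s^4/15)/3 := by ring
  have b1 := abs_le.mp t1
  have b2 := abs_le.mp t2
  have b3 := abs_le.mp t3
  rw [abs_le]
  constructor <;> linarith [b1.1, b1.2, b2.1, b2.2, b3.1, b3.2, pow_nonneg hs0 4]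

/-- abstract core: -/
lemma rem_core {p u s : ℝ} (hp0 : 0 ≤ p) (hp3 : p ≤ 1/3) (hu0 : 0 ≤ u)
    (hs0 : 0 ≤ s) (hs1 : s ≤ 1)
    (hc : |u - (s/2 + s^2/24 + s^3/720)| ≤ s^4/1000) :
    |Real.log (1 + p*u)
      - (p*s/2 + (p/24 - p^2/8)*s^2 + (p/720 - p^2/48 + p^3/24)*s^3)| ≤ s^4 := by
  have hcc := abs_le.mp hc
  have hs2 : s^2 ≤ s := by nlinarith
  have hs3 : s^3 ≤ s^2 := by nlinarith
  have hs4 : s^4 ≤ s^3 := by nlinarith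
  have hu_le : u ≤ s := by linarith [hcc.2]
  have hx0 : 0 ≤ p*u := mul_nonneg hp0 hu0
  have hxs : p*u ≤ s/3 := by nlinarith [mul_le_mul hp3 hu_le hu0 (by norm_num : (0:ℝ) ≤ 1/3)]
  have hx3 : p*u ≤ 1/3 := by linarith
  have h1 := log_approx hx0 hx3
  have h2 := polyA hp0 hp3 hu0 hs0 hs1 hc
  have hx4 : (p*u)^4 ≤ (s/3)^4 := pow_le_pow_left₀ hx0 hxs 4
  have b1 := abs_le.mp h1
  have b2 := abs_le.mp h2
  have hfin : (s/3)^4 ≤ s^4/81 := by nlinarith [pow_nonneg hs0 4]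
  rw [abs_le]
  constructor
  · linarith [b1.1, b2.1, hx4, hfin, pow_nonneg hs0 4]
  · linarith [b1.2, b2.2, hx4, hfin, pow_nonneg hs0 4]

lemma rem_bound {β t : ℝ} (hβ : Real.log 4 ≤ β) (ht : |t| ≤ 1) :
    |cgf β t - ((2/(Real.exp β + 2)) * t^2/2
      + ((2/(Real.exp β + 2))/24 - (2/(Real.exp β + 2))^2/8) * t^4
      + ((2/(Real.exp β + 2))/720 - (2/(Real.exp β + 2))^2/48 + (2/(Real.exp β + 2))^3/24) * t^6)|
      ≤ t^8 := by
  have hE4 : (4:ℝ) ≤ Real.exp β := by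
    calc (4:ℝ) = Real.exp (Real.log 4) := (Real.exp_log (by norm_num)).symm
    _ ≤ Real.exp β := Real.exp_le_exp.mpr hβ
  have hp0 : (0:ℝ) ≤ 2/(Real.exp β + 2) := by positivity
  have hp3 : 2/(Real.exp β + 2) ≤ 1/3 := by
    rw [div_le_div_iff₀ (by linarith) (by norm_num)]
    linarith
  have hu0 := u_nonneg t
  have hs0 : (0:ℝ) ≤ t^2 := sq_nonneg t
  have hs1 : t^2 ≤ 1 := by
    have h := pow_le_one₀ (abs_nonneg t) ht (n := 2)
    rwa [← abs_pow, abs_of_nonneg hs0] at h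
  have hc : |((Real.exp t + Real.exp (-t)) / 2 - 1)
      - (t^2/2 + (t^2)^2/24 + (t^2)^3/720)| ≤ (t^2)^4/1000 := by
    have h := cosh_approx ht
    have e1 : t^2/2 + (t^2)^2/24 + (t^2)^3/720 = t^2/2 + t^4/24 + t^6/720 := by ring
    have e2 : (t^2)^4/1000 = t^8/1000 := by ring
    rw [e1, e2]; exact h
  have key := rem_core hp0 hp3 hu0 hs0 hs1 hc
  have harg : cgf β t - ((2/(Real.exp β + 2)) * t^2/2
      + ((2/(Real.exp β + 2))/24 - (2/(Real.exp β + 2))^2/8) * t^4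
      + ((2/(Real.exp β + 2))/720 - (2/(Real.exp β + 2))^2/48 + (2/(Real.exp β + 2))^3/24) * t^6)
      = Real.log (1 + (2/(Real.exp β + 2))*((Real.exp t + Real.exp (-t)) / 2 - 1))
      - ((2/(Real.exp β + 2))*(t^2)/2 + ((2/(Real.exp β + 2))/24 - (2/(Real.exp β + 2))^2/8)*(t^2)^2
        + ((2/(Real.exp β + 2))/720 - (2/(Real.exp β + 2))^2/48 + (2/(Real.exp β + 2))^3/24)*(t^2)^3) := by
    rw [cgf_eq]
    ring
  rw [harg]
  have : (t^2)^4 = t^8 := by ring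
  rw [← this]
  exact key

lemma log4_pos : (0:ℝ) < Real.log 4 := Real.log_pos (by norm_num)
lemma exp_log4 : Real.exp (Real.log 4) = 4 := Real.exp_log (by norm_num)

noncomputable def Ke (l lt ε : ℝ) : ℝ :=
  Kcurve (Real.log 4) + deriv Kcurve (Real.log 4) * ε + l*ε^2/2 + lt*ε^3/6
noncomputable def Be (l lt ε : ℝ) : ℝ := (Real.log 4 + ε) * Ke l lt ε
noncomputable def pe (ε : ℝ) : ℝ := 2 / (Real.exp (Real.log 4 + ε) + 2)
noncomputable def a2c (l lt ε : ℝ) : ℝ := Be l lt ε - 2 * pe ε * (Be l lt ε)^2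
noncomputable def a4c (l lt ε : ℝ) : ℝ := -(pe ε/24 - (pe ε)^2/8) * (2*Be l lt ε)^4
noncomputable def a6c (l lt ε : ℝ) : ℝ :=
  -(pe ε/720 - (pe ε)^2/48 + (pe ε)^3/24) * (2*Be l lt ε)^6

lemma G_decomp (l lt ε y : ℝ) :
    freeEnergyG (Real.log 4 + ε) (Ke l lt ε) y
      = a2c l lt ε * y^2 + a4c l lt ε * y^4 + a6c l lt ε * y^6
        - (cgf (Real.log 4 + ε) (2*Be l lt ε*y)
           - (pe ε * (2*Be l lt ε*y)^2/2 + (pe ε/24 - (pe ε)^2/8) * (2*Be l lt ε*y)^4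
              + (pe ε/720 - (pe ε)^2/48 + (pe ε)^3/24) * (2*Be l lt ε*y)^6)) := by
  unfold freeEnergyG
  rw [show 2*(Real.log 4 + ε)*Ke l lt ε*y = 2*Be l lt ε*y by unfold Be; ring]
  unfold a2c a4c a6c
  rw [show (Real.log 4 + ε) * Ke l lt ε = Be l lt ε from rfl]
  ring

lemma pe_zero : pe 0 = 1/3 := by unfold pe; rw [add_zero, exp_log4]; norm_num

lemma Be_zero (l lt : ℝ) : Be l lt 0 = 3/2 := by
  unfold Be Ke Kcurve
  rw [exp_log4]
  have h := log4_pos.ne'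
  field_simp
  ring

lemma pe_continuousAt : ContinuousAt pe 0 := by
  apply ContinuousAt.div continuousAt_const
  · exact ((Real.continuous_exp.comp (continuous_const.add continuous_id)).continuousAt).add
      continuousAt_const
  · rw [add_zero, exp_log4]; norm_num

lemma Be_continuousAt (l lt : ℝ) : ContinuousAt (Be l lt) 0 := by
  unfold Be Ke
  fun_prop

lemma tendsto_pe : Tendsto pe (nhdsWithin 0 (Set.Ioi 0)) (nhds (1/3)) := by
  have := pe_continuousAt.tendsto
  rw [pe_zero] at this
  exact this.mono_left nhdsWithin_le_nhds

lemma tendsto_Be (l lt : ℝ) : Tendsto (Be l lt) (nhdsWithin 0 (Set.Ioi 0)) (nhds (3/2)) := by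
  have := (Be_continuousAt l lt).tendsto
  rw [Be_zero] at this
  exact this.mono_left nhdsWithin_le_nhds

lemma tendsto_a6c (l lt : ℝ) :
    Tendsto (a6c l lt) (nhdsWithin 0 (Set.Ioi 0)) (nhds (9/40)) := by
  have h : Tendsto (fun ε => -(pe ε/720 - (pe ε)^2/48 + (pe ε)^3/24) * (2*Be l lt ε)^6)
      (nhdsWithin 0 (Set.Ioi 0))
      (nhds (-((1/3)/720 - (1/3:ℝ)^2/48 + (1/3)^3/24) * (2*(3/2))^6)) := by
    apply Tendsto.mul
    · apply Tendsto.neg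
      exact ((tendsto_pe.div_const 720).sub ((tendsto_pe.pow 2).div_const 48)).add
        ((tendsto_pe.pow 3).div_const 24)
    · exact ((tendsto_const_nhds.mul (tendsto_Be l lt)).pow 6)
  have : -((1/3:ℝ)/720 - (1/3:ℝ)^2/48 + (1/3)^3/24) * (2*(3/2:ℝ))^6 = 9/40 := by norm_num
  rw [this] at h
  exact h

lemma tendsto_slope_exp : Tendsto (fun ε : ℝ => (Real.exp ε - 1)/ε)
    (nhdsWithin 0 (Set.Ioi 0)) (nhds 1) := by
  have h := hasDerivAt_iff_tendsto_slope.mp (Real.hasDerivAt_exp 0)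
  rw [Real.exp_zero] at h
  have h2 : Tendsto (slope Real.exp 0) (nhdsWithin 0 (Set.Ioi 0)) (nhds 1) :=
    h.mono_left (nhdsWithin_mono 0 (fun x hx => ne_of_gt hx))
  apply h2.congr
  intro ε
  rw [slope_def_field]
  simp [Real.exp_zero]

lemma exp_pos_add (ε : ℝ) : (0:ℝ) < Real.exp (Real.log 4 + ε) + 2 := by positivity

lemma tendsto_a4c (l lt : ℝ) :
    Tendsto (fun ε => a4c l lt ε / ε) (nhdsWithin 0 (Set.Ioi 0)) (nhds (-(3/4))) := by
  have hfac : ∀ ε ∈ Set.Ioi (0:ℝ), a4c l lt ε / ε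
      = (-(pe ε/24) * (2*Be l lt ε)^4 * (4/(Real.exp (Real.log 4 + ε)+2)))
        * ((Real.exp ε - 1)/ε) := by
    intro ε hε
    have hε0 : ε ≠ 0 := ne_of_gt hε
    have hE : Real.exp (Real.log 4 + ε) + 2 ≠ 0 := (exp_pos_add ε).ne'
    have hEe : Real.exp (Real.log 4 + ε) = 4 * Real.exp ε := by
      rw [Real.exp_add, exp_log4]
    unfold a4c pe
    rw [hEe] at hE ⊢
    field_simp
    ring
  have hmain : Tendsto (fun ε => (-(pe ε/24) * (2*Be l lt ε)^4
      * (4/(Real.exp (Real.log 4 + ε)+2))) * ((Real.exp ε - 1)/ε))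
      (nhdsWithin 0 (Set.Ioi 0)) (nhds ((-((1/3)/24) * (2*(3/2:ℝ))^4 * (4/6)) * 1)) := by
    apply Tendsto.mul _ tendsto_slope_exp
    apply Tendsto.mul
    · exact ((tendsto_pe.div_const 24).neg).mul ((tendsto_const_nhds.mul (tendsto_Be l lt)).pow 4)
    · apply Tendsto.div tendsto_const_nhds _ (by norm_num)
      have hc : ContinuousAt (fun ε => Real.exp (Real.log 4 + ε) + 2) 0 := by fun_prop
      have := hc.tendsto
      rw [add_zero, exp_log4, show (4:ℝ)+2 = 6 by norm_num] at this
      exact this.mono_left nhdsWithin_le_nhds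
  have hval : (-((1/3:ℝ)/24) * (2*(3/2:ℝ))^4 * (4/6)) * 1 = -(3/4) := by norm_num
  rw [hval] at hmain
  exact hmain.congr' (by
    filter_upwards [self_mem_nhdsWithin] with ε hε
    exact (hfac ε hε).symm)
lemma iteratedDerivWithin_Icc_eq {f : ℝ → ℝ} {s : Set ℝ} (hs : IsOpen s) {n : ℕ}
    (hf : ContDiffOn ℝ n f s) {a b x : ℝ} (hab : a < b) (hts : Icc a b ⊆ s)
    (hx : x ∈ Icc a b) {m : ℕ} (hmn : m ≤ n) :
    iteratedDerivWithin m f (Icc a b) x = iteratedDeriv m f x := by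
  have h1 : HasFTaylorSeriesUpToOn n f (ftaylorSeriesWithin ℝ f s) s :=
    hf.ftaylorSeriesWithin hs.uniqueDiffOn
  have h2 := (h1.mono hts).eq_iteratedFDerivWithin_of_uniqueDiffOn
    (by exact_mod_cast hmn) (uniqueDiffOn_Icc hab) hx
  have h3 : ftaylorSeriesWithin ℝ f s x m = iteratedFDerivWithin ℝ m f s x := rfl
  have h4 : iteratedFDerivWithin ℝ m f s x = iteratedFDeriv ℝ m f x :=
    iteratedFDerivWithin_of_isOpen m hs (hts hx)
  rw [iteratedDerivWithin_eq_iteratedFDerivWithin, iteratedDeriv_eq_iteratedFDeriv,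
    ← h2, h3, h4]

lemma kcurve_contDiffOn : ContDiffOn ℝ 3 Kcurve (Set.Ioi (0:ℝ)) := by
  apply ContDiffOn.div
  · exact (Real.contDiff_exp.add contDiff_const).contDiffOn
  · exact (contDiff_const.mul contDiff_id).contDiffOn
  · intro x hx
    have : (0:ℝ) < x := hx
    positivity

/-- second-order Peano remainder for Kcurve at log 4 -/
lemma kcurve_taylor2 :
    Tendsto (fun ε : ℝ => (Kcurve (Real.log 4 + ε) - Kcurve (Real.log 4)
      - deriv Kcurve (Real.log 4) * ε
      - iteratedDeriv 2 Kcurve (Real.log 4) * ε^2/2) / ε^2)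
      (nhdsWithin 0 (Set.Ioi 0)) (nhds 0) := by
  set a : ℝ := Real.log 4 with ha
  have hab : a < a + 1 := by linarith
  have hsub : Icc a (a+1) ⊆ Set.Ioi (0:ℝ) := by
    intro x hx
    have := hx.1
    have := log4_pos
    simp only [Set.mem_Ioi]
    linarith [hx.1]
  have hcd : ContDiffOn ℝ (2+1) Kcurve (Icc a (a+1)) := by
    exact_mod_cast kcurve_contDiffOn.mono hsub
  obtain ⟨c, hc⟩ := exists_taylor_mean_remainder_bound (n := 2) (le_of_lt hab) hcd
  -- rewrite taylor polynomial
  have htp : ∀ x : ℝ, taylorWithinEval Kcurve 2 (Icc a (a+1)) a x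
      = Kcurve a + (x - a) * deriv Kcurve a
        + ((x - a)^2/2) * iteratedDeriv 2 Kcurve a := by
    intro x
    have e0 : iteratedDerivWithin 0 Kcurve (Icc a (a+1)) a = Kcurve a := by
      simp [iteratedDerivWithin_zero]
    have e1 : iteratedDerivWithin 1 Kcurve (Icc a (a+1)) a = deriv Kcurve a := by
      rw [iteratedDerivWithin_Icc_eq isOpen_Ioi kcurve_contDiffOn hab hsub
        (by constructor <;> linarith) (by norm_num), iteratedDeriv_one]
    have e2 : iteratedDerivWithin 2 Kcurve (Icc a (a+1)) a = iteratedDeriv 2 Kcurve a := by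
      exact iteratedDerivWithin_Icc_eq isOpen_Ioi kcurve_contDiffOn hab hsub
        (by constructor <;> linarith) (by norm_num)
    rw [taylor_within_apply]
    rw [Finset.sum_range_succ, Finset.sum_range_succ, Finset.sum_range_succ,
      Finset.sum_range_zero, e0, e1, e2]
    simp only [smul_eq_mul, Nat.factorial, Nat.cast_one, Nat.cast_ofNat, pow_zero, pow_one,
      Nat.mul_one, Nat.one_mul]
    push_cast
    ring
  -- squeeze
  rw [Metric.tendsto_nhdsWithin_nhds]
  intro δ hδ
  refine ⟨min 1 (δ / (|c|+1)), by positivity, ?_⟩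
  intro ε hε hd
  have hε0 : (0:ℝ) < ε := hε
  rw [Real.dist_eq, sub_zero, abs_of_pos hε0] at hd
  have hε1 : ε ≤ 1 := le_of_lt (lt_of_lt_of_le hd (min_le_left _ _))
  have hεδ : ε < δ / (|c|+1) := lt_of_lt_of_le hd (min_le_right _ _)
  have hkey : (|c|+1) * ε < δ := by
    rw [lt_div_iff₀ (by positivity)] at hεδ
    linarith
  have hx : a + ε ∈ Icc a (a+1) := ⟨by linarith, by linarith⟩
  have h' : |Kcurve (a+ε) - Kcurve a - deriv Kcurve a * ε
      - iteratedDeriv 2 Kcurve a * ε^2/2| ≤ c * ε^3 := by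
    have h := hc (a+ε) hx
    rw [htp (a+ε), Real.norm_eq_abs] at h
    have e : Kcurve (a+ε) - (Kcurve a + (a+ε-a) * deriv Kcurve a
        + ((a+ε-a)^2/2) * iteratedDeriv 2 Kcurve a)
        = Kcurve (a+ε) - Kcurve a - deriv Kcurve a * ε
          - iteratedDeriv 2 Kcurve a * ε^2/2 := by ring
    have e2 : (a+ε-a)^(2+1) = ε^3 := by ring
    rw [e, e2] at h
    exact h
  rw [Real.dist_eq, sub_zero, abs_div, abs_of_pos (by positivity : (0:ℝ) < ε^2)]
  rw [div_lt_iff₀ (by positivity)]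
  nlinarith [h', abs_nonneg (Kcurve (a+ε) - Kcurve a - deriv Kcurve a * ε
    - iteratedDeriv 2 Kcurve a * ε^2/2), le_abs_self c, abs_nonneg c, hε0,
    mul_pos hε0 hε0, mul_pos (mul_pos hε0 hε0) hε0]

lemma tendsto_a2c (l lt : ℝ) :
    Tendsto (fun ε => a2c l lt ε / ε^2) (nhdsWithin 0 (Set.Ioi 0))
      (nhds ((1/2) * Real.log 4 * (iteratedDeriv 2 Kcurve (Real.log 4) - l))) := by
  have hfac : ∀ ε ∈ Set.Ioi (0:ℝ), a2c l lt ε / ε^2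
      = (4*Be l lt ε*(Real.log 4+ε)/(Real.exp (Real.log 4+ε)+2))
        * ((Kcurve (Real.log 4+ε) - Kcurve (Real.log 4) - deriv Kcurve (Real.log 4)*ε
            - iteratedDeriv 2 Kcurve (Real.log 4)*ε^2/2)/ε^2
           + (iteratedDeriv 2 Kcurve (Real.log 4) - l)/2 - lt*ε/6) := by
    intro ε hε
    have hε0 : (ε:ℝ) ≠ 0 := ne_of_gt hε
    have hβ : (0:ℝ) < Real.log 4 + ε := by linarith [log4_pos, Set.mem_Ioi.mp hε]
    have hKpos : 0 < Kcurve (Real.log 4 + ε) := by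
      unfold Kcurve; positivity
    have hK : Real.exp (Real.log 4 + ε) + 2 = 4*(Real.log 4+ε)*Kcurve (Real.log 4+ε) := by
      unfold Kcurve
      field_simp
    unfold a2c pe Be Ke
    rw [hK]
    field_simp
    ring
  have hF2 : Tendsto (fun ε => 4*Be l lt ε*(Real.log 4+ε)/(Real.exp (Real.log 4+ε)+2))
      (nhdsWithin 0 (Set.Ioi 0)) (nhds (4*(3/2)*(Real.log 4)/6)) := by
    apply Tendsto.div
    · apply Tendsto.mul (tendsto_const_nhds.mul (tendsto_Be l lt))
      have hc : ContinuousAt (fun ε : ℝ => Real.log 4 + ε) 0 := by fun_prop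
      have := hc.tendsto
      rw [add_zero] at this
      exact this.mono_left nhdsWithin_le_nhds
    · have hc : ContinuousAt (fun ε : ℝ => Real.exp (Real.log 4 + ε) + 2) 0 := by fun_prop
      have := hc.tendsto
      rw [add_zero, exp_log4, show (4:ℝ)+2 = 6 by norm_num] at this
      exact this.mono_left nhdsWithin_le_nhds
    · norm_num
  have hBr : Tendsto (fun ε => (Kcurve (Real.log 4+ε) - Kcurve (Real.log 4)
      - deriv Kcurve (Real.log 4)*ε - iteratedDeriv 2 Kcurve (Real.log 4)*ε^2/2)/ε^2
      + (iteratedDeriv 2 Kcurve (Real.log 4) - l)/2 - lt*ε/6)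
      (nhdsWithin 0 (Set.Ioi 0))
      (nhds (0 + (iteratedDeriv 2 Kcurve (Real.log 4) - l)/2 - lt*0/6)) := by
    apply Tendsto.sub
    · exact kcurve_taylor2.add tendsto_const_nhds
    · apply Tendsto.div_const
      apply Tendsto.const_mul
      exact tendsto_id.mono_left nhdsWithin_le_nhds
  have hmain := hF2.mul hBr
  have hval : (4*(3/2:ℝ)*(Real.log 4)/6) * (0 + (iteratedDeriv 2 Kcurve (Real.log 4) - l)/2 - lt*0/6)
      = (1/2) * Real.log 4 * (iteratedDeriv 2 Kcurve (Real.log 4) - l) := by ring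
  rw [hval] at hmain
  exact hmain.congr' (by
    filter_upwards [self_mem_nhdsWithin] with ε hε
    exact (hfac ε hε).symm)

lemma key_uniform (l lt : ℝ) {C : Set ℝ} {M : ℝ} (hM1 : 1 ≤ M) (hxM : ∀ x ∈ C, |x| ≤ M)
    {δ : ℝ} (hδ : 0 < δ) :
    ∀ᶠ ε in nhdsWithin (0:ℝ) (Set.Ioi 0), ∀ x ∈ C,
      |((1/2) * Real.log 4 * (iteratedDeriv 2 Kcurve (Real.log 4) - l) * x ^ 2 -
              4 * (3 / 16) * x ^ 4 + (9 / 40) * x ^ 6)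
        - (ε⁻¹)^3 * freeEnergyG (Real.log 4 + ε) (Ke l lt ε) (x * Real.sqrt ε)| < δ := by
  have hM0 : (0:ℝ) < M := lt_of_lt_of_le one_pos hM1
  have e2 := Metric.tendsto_nhds.mp (tendsto_a2c l lt) (δ/(4*M^2)) (by positivity)
  have e4 := Metric.tendsto_nhds.mp (tendsto_a4c l lt) (δ/(4*M^4)) (by positivity)
  have e6 := Metric.tendsto_nhds.mp (tendsto_a6c l lt) (δ/(4*M^6)) (by positivity)
  have eB : ∀ᶠ ε in nhdsWithin (0:ℝ) (Set.Ioi 0), Be l lt ε < 2 :=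
    (tendsto_Be l lt).eventually_lt_const (by norm_num)
  have eB0 : ∀ᶠ ε in nhdsWithin (0:ℝ) (Set.Ioi 0), 0 < Be l lt ε :=
    (tendsto_Be l lt).eventually_const_lt (by norm_num)
  have ec : ∀ᶠ ε in nhdsWithin (0:ℝ) (Set.Ioi 0),
      ε < min (1/(16*M^2)) (δ/(4*65536*M^8)) :=
    (eventually_lt_nhds (by positivity)).filter_mono nhdsWithin_le_nhds
  filter_upwards [e2, e4, e6, eB, eB0, ec, eventually_mem_nhdsWithin]
    with ε h2 h4 h6 hB hB0 hc hεmem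
  intro x hx
  have hεpos : (0:ℝ) < ε := hεmem
  have hεM : ε < 1/(16*M^2) := lt_of_lt_of_le hc (min_le_left _ _)
  have hεδ : ε < δ/(4*65536*M^8) := lt_of_lt_of_le hc (min_le_right _ _)
  have hxM' := hxM x hx
  have hx0 := abs_nonneg x
  have hx2 : x^2 ≤ M^2 := by
    have := pow_le_pow_left₀ hx0 hxM' 2
    rwa [← abs_pow, abs_of_nonneg (by positivity : (0:ℝ) ≤ x^2)] at this
  have hx4 : x^4 ≤ M^4 := by
    have := pow_le_pow_left₀ hx0 hxM' 4
    rwa [← abs_pow, abs_of_nonneg (by positivity : (0:ℝ) ≤ x^4)] at this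
  have hx6 : x^6 ≤ M^6 := by
    have := pow_le_pow_left₀ hx0 hxM' 6
    rwa [← abs_pow, abs_of_nonneg (by positivity : (0:ℝ) ≤ x^6)] at this
  set y := x * Real.sqrt ε with hy
  -- the |t| ≤ 1 bound
  have hsqε : Real.sqrt ε ≤ 1/(4*M) := by
    have h1 : ε ≤ (1/(4*M))^2 := by
      have : (1/(4*M))^2 = 1/(16*M^2) := by ring
      rw [this]; linarith
    have := Real.sqrt_le_sqrt h1
    rwa [Real.sqrt_sq (by positivity)] at this
  have ht2 : |2*Be l lt ε*y| ≤ 4*M*Real.sqrt ε := by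
    have hyabs : |y| = |x| * Real.sqrt ε := by
      rw [hy, abs_mul, abs_of_nonneg (Real.sqrt_nonneg ε)]
    have habs : |2*Be l lt ε*y| = (2*Be l lt ε) * |y| := by
      rw [abs_mul, abs_of_nonneg (by linarith : (0:ℝ) ≤ 2*Be l lt ε)]
    rw [habs, hyabs]
    have hb : 2*Be l lt ε ≤ 4 := by linarith
    calc 2*Be l lt ε * (|x| * Real.sqrt ε) ≤ 4 * (M * Real.sqrt ε) := by
          apply mul_le_mul hb _ (by positivity) (by norm_num)
          exact mul_le_mul_of_nonneg_right hxM' (Real.sqrt_nonneg ε)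
    _ = 4*M*Real.sqrt ε := by ring
  have ht1 : |2*Be l lt ε*y| ≤ 1 := by
    refine ht2.trans ?_
    calc 4*M*Real.sqrt ε ≤ 4*M*(1/(4*M)) := by
          apply mul_le_mul_of_nonneg_left hsqε (by positivity)
    _ = 1 := by field_simp
  have hrem := rem_bound (β := Real.log 4 + ε) (by linarith : Real.log 4 ≤ Real.log 4 + ε) ht1
  -- rewrite pe
  have hpe : (2:ℝ)/(Real.exp (Real.log 4 + ε) + 2) = pe ε := rfl
  rw [hpe] at hrem
  set R := cgf (Real.log 4 + ε) (2*Be l lt ε*y)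
      - (pe ε * (2*Be l lt ε*y)^2/2 + (pe ε/24 - (pe ε)^2/8) * (2*Be l lt ε*y)^4
         + (pe ε/720 - (pe ε)^2/48 + (pe ε)^3/24) * (2*Be l lt ε*y)^6) with hR
  -- decomposition
  have hy2 : y^2 = x^2*ε := by rw [hy, mul_pow, Real.sq_sqrt hεpos.le]
  have hy4 : y^4 = x^4*ε^2 := by
    have : y^4 = (y^2)^2 := by ring
    rw [this, hy2]; ring
  have hy6 : y^6 = x^6*ε^3 := by
    have : y^6 = (y^2)^3 := by ring
    rw [this, hy2]; ring
  have hF : (ε⁻¹)^3 * freeEnergyG (Real.log 4 + ε) (Ke l lt ε) y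
      = a2c l lt ε/ε^2*x^2 + a4c l lt ε/ε*x^4 + a6c l lt ε*x^6 - (ε⁻¹)^3*R := by
    rw [G_decomp l lt ε y, ← hR, hy2, hy4, hy6]
    field_simp
  rw [hF]
  -- bounds on coefficients
  rw [Real.dist_eq] at h2 h4 h6
  -- remainder bound
  have h8 : (2*Be l lt ε*y)^8 ≤ 65536*M^8*ε^4 := by
    have habs : (2*Be l lt ε*y)^8 = |2*Be l lt ε*y|^8 := by
      rw [← abs_pow, abs_of_nonneg (by positivity)]
    rw [habs]
    calc |2*Be l lt ε*y|^8 ≤ (4*M*Real.sqrt ε)^8 :=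
          pow_le_pow_left₀ (abs_nonneg _) ht2 8
    _ = 65536*M^8*((Real.sqrt ε)^2)^4 := by ring
    _ = 65536*M^8*ε^4 := by rw [Real.sq_sqrt hεpos.le]
  have hRb : |(ε⁻¹)^3*R| ≤ 65536*M^8*ε := by
    rw [abs_mul, abs_of_nonneg (by positivity : (0:ℝ) ≤ (ε⁻¹)^3)]
    calc (ε⁻¹)^3 * |R| ≤ (ε⁻¹)^3 * (65536*M^8*ε^4) := by
          apply mul_le_mul_of_nonneg_left (hrem.trans h8) (by positivity)
    _ = 65536*M^8*ε := by field_simp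
  have hRb2 : |(ε⁻¹)^3*R| < δ/4 := by
    refine lt_of_le_of_lt hRb ?_
    calc 65536*M^8*ε < 65536*M^8*(δ/(4*65536*M^8)) := by
          apply mul_lt_mul_of_pos_left hεδ (by positivity)
    _ = δ/4 := by field_simp
  -- term bounds
  have hb2 : |((1/2) * Real.log 4 * (iteratedDeriv 2 Kcurve (Real.log 4) - l)
      - a2c l lt ε/ε^2)*x^2| ≤ δ/(4*M^2)*M^2 := by
    rw [abs_mul, abs_of_nonneg (by positivity : (0:ℝ) ≤ x^2), abs_sub_comm]
    exact mul_le_mul h2.le hx2 (by positivity) (by positivity)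
  have hb4 : |(-(3/4) - a4c l lt ε/ε)*x^4| ≤ δ/(4*M^4)*M^4 := by
    rw [abs_mul, abs_of_nonneg (by positivity : (0:ℝ) ≤ x^4), abs_sub_comm]
    exact mul_le_mul h4.le hx4 (by positivity) (by positivity)
  have hb6 : |((9/40) - a6c l lt ε)*x^6| ≤ δ/(4*M^6)*M^6 := by
    rw [abs_mul, abs_of_nonneg (by positivity : (0:ℝ) ≤ x^6), abs_sub_comm]
    exact mul_le_mul h6.le hx6 (by positivity) (by positivity)
  have hsimp2 : δ/(4*M^2)*M^2 = δ/4 := by field_simp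
  have hsimp4 : δ/(4*M^4)*M^4 = δ/4 := by field_simp
  have hsimp6 : δ/(4*M^6)*M^6 = δ/4 := by field_simp
  -- final triangle inequality
  have htri : |((1/2) * Real.log 4 * (iteratedDeriv 2 Kcurve (Real.log 4) - l) * x ^ 2 -
        4 * (3 / 16) * x ^ 4 + (9 / 40) * x ^ 6)
      - (a2c l lt ε/ε^2*x^2 + a4c l lt ε/ε*x^4 + a6c l lt ε*x^6 - (ε⁻¹)^3*R)|
      ≤ |((1/2) * Real.log 4 * (iteratedDeriv 2 Kcurve (Real.log 4) - l)
            - a2c l lt ε/ε^2)*x^2|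
        + |(-(3/4) - a4c l lt ε/ε)*x^4| + |((9/40) - a6c l lt ε)*x^6| + |(ε⁻¹)^3*R| := by
    have heq : ((1/2) * Real.log 4 * (iteratedDeriv 2 Kcurve (Real.log 4) - l) * x ^ 2 -
        4 * (3 / 16) * x ^ 4 + (9 / 40) * x ^ 6)
      - (a2c l lt ε/ε^2*x^2 + a4c l lt ε/ε*x^4 + a6c l lt ε*x^6 - (ε⁻¹)^3*R)
      = ((1/2) * Real.log 4 * (iteratedDeriv 2 Kcurve (Real.log 4) - l)
            - a2c l lt ε/ε^2)*x^2
        + ((-(3/4) - a4c l lt ε/ε)*x^4 + (((9/40) - a6c l lt ε)*x^6 + (ε⁻¹)^3*R)) := by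
      ring
    rw [heq]
    calc _ ≤ |((1/2) * Real.log 4 * (iteratedDeriv 2 Kcurve (Real.log 4) - l)
            - a2c l lt ε/ε^2)*x^2|
        + |(-(3/4) - a4c l lt ε/ε)*x^4 + (((9/40) - a6c l lt ε)*x^6 + (ε⁻¹)^3*R)| :=
          abs_add_le _ _
    _ ≤ _ := by
          have := abs_add_le ((-(3/4) - a4c l lt ε/ε)*x^4) (((9/40) - a6c l lt ε)*x^6 + (ε⁻¹)^3*R)
          have := abs_add_le (((9/40) - a6c l lt ε)*x^6) ((ε⁻¹)^3*R)
          linarith [abs_add_le ((-(3/4) - a4c l lt ε/ε)*x^4)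
            (((9/40) - a6c l lt ε)*x^6 + (ε⁻¹)^3*R),
            abs_add_le (((9/40) - a6c l lt ε)*x^6) ((ε⁻¹)^3*R)]
  linarith [htri, hb2, hb4, hb6, hRb2, hsimp2.le, hsimp4.le, hsimp6.le]

/-- uniform convergence of scaled free-energy functionals to the
Ginzburg--Landau polynomial `g_ℓ` for the sequence tangent to the spinodal
curve at the tricritical point. -/
theorem stmt6 (α ℓ ℓt : ℝ) (hα : 0 < α) :
    ∀ C : Set ℝ, IsCompact C →
      TendstoUniformlyOn
        (fun (n : ℕ) (x : ℝ) =>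
          (n : ℝ) ^ (3 * α) *
            freeEnergyG (Real.log 4 + 1 / (n : ℝ) ^ α)
              (Kcurve (Real.log 4) + deriv Kcurve (Real.log 4) / (n : ℝ) ^ α +
                ℓ / (2 * (n : ℝ) ^ (2 * α)) + ℓt / (6 * (n : ℝ) ^ (3 * α)))
              (x / (n : ℝ) ^ (α / 2)))
        (fun x : ℝ =>
          (1 / 2) * Real.log 4 * (iteratedDeriv 2 Kcurve (Real.log 4) - ℓ) * x ^ 2 -
            4 * (3 / 16) * x ^ 4 + (9 / 40) * x ^ 6)
        atTop C := by
  intro C hC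
  obtain ⟨r, hr⟩ := hC.isBounded.subset_closedBall 0
  set M : ℝ := max r 1 with hM
  have hM1 : (1:ℝ) ≤ M := le_max_right r 1
  have hxM : ∀ x ∈ C, |x| ≤ M := by
    intro x hx
    have h := hr hx
    rw [Metric.mem_closedBall, Real.dist_eq, sub_zero] at h
    exact le_trans h (le_max_left r 1)
  rw [Metric.tendstoUniformlyOn_iff]
  intro δ hδ
  have hkey := key_uniform ℓ ℓt hM1 hxM hδ
  have h1 : Tendsto (fun n : ℕ => ((n:ℝ))^α) atTop atTop :=
    (tendsto_rpow_atTop hα).comp tendsto_natCast_atTop_atTop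
  have hten : Tendsto (fun n : ℕ => ((n:ℝ)^α)⁻¹) atTop (nhdsWithin 0 (Set.Ioi 0)) := by
    apply tendsto_nhdsWithin_of_tendsto_nhds_of_eventually_within _ h1.inv_tendsto_atTop
    filter_upwards [h1.eventually_gt_atTop 0] with n hn
    exact Set.mem_Ioi.mpr (inv_pos.mpr hn)
  filter_upwards [hten.eventually hkey, eventually_ge_atTop 1] with n hn hn1 x hx
  rw [Real.dist_eq]
  have hnp : (0:ℝ) < (n:ℝ)^α := by
    have hn0 : (0:ℝ) < (n:ℝ) := by exact_mod_cast Nat.lt_of_lt_of_le Nat.zero_lt_one hn1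
    positivity
  have h := hn x hx
  set ε : ℝ := ((n:ℝ)^α)⁻¹ with hεdef
  have hεpos : 0 < ε := inv_pos.mpr hnp
  have A1 : (n:ℝ)^(3*α) = (ε⁻¹)^3 := by
    rw [hεdef, inv_inv, ← Real.rpow_natCast ((n:ℝ)^α) 3, ← Real.rpow_mul (Nat.cast_nonneg n)]
    norm_num
    ring_nf
  have A2 : 1/(n:ℝ)^α = ε := by rw [hεdef, one_div]
  have A3 : deriv Kcurve (Real.log 4)/(n:ℝ)^α = deriv Kcurve (Real.log 4) * ε := by
    rw [hεdef, div_eq_mul_inv]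
  have A4 : ℓ/(2*(n:ℝ)^(2*α)) = ℓ*ε^2/2 := by
    have h2a : (n:ℝ)^(2*α) = ((n:ℝ)^α)^2 := by
      rw [← Real.rpow_natCast ((n:ℝ)^α) 2, ← Real.rpow_mul (Nat.cast_nonneg n)]
      norm_num
      ring_nf
    rw [h2a, hεdef]
    field_simp
  have A5 : ℓt/(6*(n:ℝ)^(3*α)) = ℓt*ε^3/6 := by
    have h3a : (n:ℝ)^(3*α) = ((n:ℝ)^α)^3 := by
      rw [← Real.rpow_natCast ((n:ℝ)^α) 3, ← Real.rpow_mul (Nat.cast_nonneg n)]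
      norm_num
      ring_nf
    rw [h3a, hεdef]
    field_simp
  have A6 : x/(n:ℝ)^(α/2) = x * Real.sqrt ε := by
    have hhalf : (n:ℝ)^(α/2) = Real.sqrt ((n:ℝ)^α) := by
      rw [Real.sqrt_eq_rpow, ← Real.rpow_mul (Nat.cast_nonneg n)]
      ring_nf
    have hsi : Real.sqrt ε = (Real.sqrt ((n:ℝ)^α))⁻¹ := by
      rw [hεdef, Real.sqrt_inv]
    rw [hhalf, hsi, div_eq_mul_inv]
  rw [A5, A4, A3, A2, A1, A6]
  unfold Ke at h
  exact h
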